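/- Let S be an irreducible numerical semigroup with Frobenius number F and let x be a minimal generator of S with F/2 < x < F, 2x - F ∉ S, 3x ≠ 2F, 4x ≠ 3F, and F - x less than the multiplicity of S. Then (S \ {x}) ∪ {F - x} is an irreducible numerical semigroup with Frobenius number F. -/

import Mathlib

/-- A numerical semigroup: a cofinite additive submonoid of ℕ. -/
def IsNumericalSemigroup (S : Set ℕ) : Prop :=
  0 ∈ S ∧ (∀ a ∈ S, ∀ b ∈ S, a + b ∈ S) ∧ Sᶜ.Finite

/-- `F` is the Frobenius number of `S`: the largest natural number not in `S`. -/
def IsFrobenius (S : Set ℕ) (F : ℕ) : Prop :=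
  F ∉ S ∧ ∀ n : ℕ, n ∉ S → n ≤ F

/-- The set of pseudo-Frobenius numbers of `S`. -/
def PF (S : Set ℕ) : Set ℕ :=
  {x | x ∉ S ∧ ∀ s ∈ S, s ≠ 0 → x + s ∈ S}

/-- The genus of `S`: the number of gaps. -/
noncomputable def genus (S : Set ℕ) : ℕ := Sᶜ.ncard

/-- The type of `S`: the number of pseudo-Frobenius numbers. -/
noncomputable def typ (S : Set ℕ) : ℕ := (PF S).ncard

/-- The gaps of the second type: gaps `x` such that `F - x` is also a gap. -/
def Lset (S : Set ℕ) (F : ℕ) : Set ℕ := {x | x ∉ S ∧ F - x ∉ S}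

/-- `S` is symmetric with Frobenius number `F`: for every integer `x`,
exactly one of `x ∈ S`, `F - x ∈ S` holds (expressed over `ℕ`). -/
def IsSymmetric (S : Set ℕ) (F : ℕ) : Prop :=
  ∀ x : ℕ, x ≤ F → (x ∈ S ↔ F - x ∉ S)

/-- `S` is pseudo-symmetric with Frobenius number `F`. -/
def IsPseudoSymmetric (S : Set ℕ) (F : ℕ) : Prop :=
  Even F ∧ ∀ x : ℕ, x ≤ F → 2 * x ≠ F → (x ∈ S ↔ F - x ∉ S)

/-- `S` is irreducible: it is not the intersection of two numerical semigroups
properly containing it. -/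
def IsIrreducibleNS (S : Set ℕ) : Prop :=
  IsNumericalSemigroup S ∧
    ¬ ∃ S₁ S₂ : Set ℕ, IsNumericalSemigroup S₁ ∧ IsNumericalSemigroup S₂ ∧
      S ⊂ S₁ ∧ S ⊂ S₂ ∧ S = S₁ ∩ S₂

/-- `x` is a minimal generator of `S`: a nonzero element of `S` that is not a
sum of two nonzero elements of `S`. -/
def IsMinGen (S : Set ℕ) (x : ℕ) : Prop :=
  x ∈ S ∧ x ≠ 0 ∧ ¬ ∃ a ∈ S, ∃ b ∈ S, a ≠ 0 ∧ b ≠ 0 ∧ x = a + b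

/-- `m` is the multiplicity of `S`: its least positive element. -/
def IsMultiplicity (S : Set ℕ) (m : ℕ) : Prop :=
  m ∈ S ∧ m ≠ 0 ∧ ∀ s ∈ S, s ≠ 0 → m ≤ s

private lemma ns_gt_frob {S : Set ℕ} {F : ℕ} (hF : IsFrobenius S F) {n : ℕ} (h : F < n) :
    n ∈ S := by
  by_contra hn; exact absurd (hF.2 n hn) (by omega)

private lemma maximal_ns {S : Set ℕ} {F : ℕ} (hirr : IsIrreducibleNS S) (hF : IsFrobenius S F)
    {T : Set ℕ} (hT : IsNumericalSemigroup T) (hST : S ⊆ T) (hFT : F ∉ T) : T = S := by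
  by_contra hne
  apply hirr.2
  refine ⟨T, S ∪ {n | F ≤ n}, hT, ⟨Or.inl hirr.1.1, ?_, ?_⟩, ?_, ?_, ?_⟩
  · rintro a (ha | ha) b (hb | hb)
    · exact Or.inl (hirr.1.2.1 a ha b hb)
    · exact Or.inr (by simp only [Set.mem_setOf_eq] at hb ⊢; omega)
    · exact Or.inr (by simp only [Set.mem_setOf_eq] at ha ⊢; omega)
    · exact Or.inr (by simp only [Set.mem_setOf_eq] at ha ⊢; omega)
  · exact hirr.1.2.2.subset (Set.compl_subset_compl.mpr Set.subset_union_left)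
  · exact Set.ssubset_iff_subset_ne.mpr ⟨hST, fun h => hne h.symm⟩
  · refine Set.ssubset_iff_subset_ne.mpr ⟨Set.subset_union_left, fun h => hF.1 ?_⟩
    rw [h]; exact Or.inr (by simp)
  · ext n
    constructor
    · intro hn; exact ⟨hST hn, Or.inl hn⟩
    · rintro ⟨hnT, hn | hn⟩
      · exact hn
      · simp only [Set.mem_setOf_eq] at hn
        rcases eq_or_lt_of_le hn with rfl | hlt
        · exact absurd hnT hFT
        · exact ns_gt_frob hF hlt

/-- The key symmetry property of irreducible numerical semigroups. -/
private lemma sym_of_irr {S : Set ℕ} {F : ℕ} (hirr : IsIrreducibleNS S) (hF : IsFrobenius S F) :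
    ∀ y, y ∉ S → y ≠ F → (F - y ∈ S ∨ 2 * y = F) := by
  by_contra hcon
  push_neg at hcon
  obtain ⟨y0, hy0S, hy0F, hy0L, hy0two⟩ := hcon
  set L : Set ℕ := {y | y ∉ S ∧ F - y ∉ S ∧ 2 * y ≠ F} with hLdef
  have hLfin : L.Finite := hirr.1.2.2.subset (fun y hy => hy.1)
  have hLne : L.Nonempty := ⟨y0, hy0S, hy0L, hy0two⟩
  obtain ⟨h, hhL, hmaxw⟩ := Set.Finite.exists_maximalFor id L hLfin hLne
  have hmax : ∀ z ∈ L, z ≤ h := by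
    intro z hz
    by_contra hzh
    have := hmaxw hz (show id h ≤ id z by simp only [id]; omega)
    simp only [id] at this
    omega
  obtain ⟨hh, hFh, hh2⟩ := hhL
  have hhF : h ≤ F := hF.2 h hh
  have hh0 : h ≠ 0 := fun he => hh (he ▸ hirr.1.1)
  -- h is a pseudo-Frobenius number
  have hPF : ∀ s ∈ S, s ≠ 0 → h + s ∈ S := by
    intro s hs hs0
    by_contra hhs
    have hhsF : h + s ≤ F := hF.2 _ hhs
    have hhsneF : h + s ≠ F := by
      intro he
      exact hFh (by rw [show F - h = s by omega]; exact hs)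
    have hnotL : h + s ∉ L := fun hmem => by have := hmax _ hmem; omega
    rw [hLdef] at hnotL
    simp only [Set.mem_setOf_eq, not_and, not_not] at hnotL
    rcases Classical.em (2 * (h + s) = F) with h2hs | h2hs
    · -- use h + 2s
      have hzS : h + 2 * s ∉ S := by
        intro hz
        exact hFh (by rw [show F - h = h + 2 * s by omega]; exact hz)
      have hzL : h + 2 * s ∈ L := by
        refine ⟨hzS, ?_, by omega⟩
        rw [show F - (h + 2 * s) = h by omega]; exact hh
      have := hmax _ hzL; omega
    · have hFhs : F - (h + s) ∈ S := by
        rcases Classical.em (F - (h + s) ∈ S) with hc | hc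
        · exact hc
        · exact absurd (hnotL hhs hc) h2hs
      have : F - (h + s) + s ∈ S := hirr.1.2.1 _ hFhs _ hs
      rw [show F - (h + s) + s = F - h by omega] at this
      exact hFh this
  -- 2h ∈ S
  have h2h : 2 * h ∈ S := by
    by_contra h2h
    have h2hF : 2 * h ≤ F := hF.2 _ h2h
    by_cases hF2h : F - 2 * h ∈ S
    · rcases eq_or_ne (F - 2 * h) 0 with h0 | h0
      · omega
      · have := hPF _ hF2h h0
        rw [show h + (F - 2 * h) = F - h by omega] at this
        exact hFh this
    · by_cases h4 : 2 * (2 * h) = F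
      · have h3S : 3 * h ∉ S := by
          intro hz
          exact hFh (by rw [show F - h = 3 * h by omega]; exact hz)
        have h3L : 3 * h ∈ L := by
          refine ⟨h3S, ?_, by omega⟩
          rw [show F - 3 * h = h by omega]; exact hh
        have := hmax _ h3L; omega
      · have : 2 * h ∈ L := ⟨h2h, hF2h, h4⟩
        have := hmax _ this; omega
  -- S ∪ {h} is a numerical semigroup avoiding F
  have hS' : IsNumericalSemigroup (insert h S) := by
    refine ⟨Or.inr hirr.1.1, ?_, ?_⟩
    · intro a ha b hb
      rw [Set.mem_insert_iff] at ha hb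
      rcases ha with ha | ha <;> rcases hb with hb | hb
      · exact Or.inr (by rw [ha, hb, show h + h = 2 * h by ring]; exact h2h)
      · rcases eq_or_ne b 0 with rfl | hb0
        · exact Or.inl (by simpa using ha)
        · exact Or.inr (by rw [ha]; exact hPF b hb hb0)
      · rcases eq_or_ne a 0 with rfl | ha0
        · exact Or.inl (by simpa using hb)
        · exact Or.inr (by rw [hb, add_comm]; exact hPF a ha ha0)
      · exact Or.inr (hirr.1.2.1 a ha b hb)
    · exact hirr.1.2.2.subset (fun n hn => fun hnS => hn (Or.inr hnS))
  have hFnotin : F ∉ insert h S := by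
    rintro (rfl | hc)
    · exact hFh (by simpa using hirr.1.1)
    · exact hF.1 hc
  have := maximal_ns hirr hF hS' (Set.subset_insert h S) hFnotin
  exact hh (this ▸ Set.mem_insert h S)

private lemma irr_of_sym {T : Set ℕ} {F : ℕ} (hT : IsNumericalSemigroup T)
    (hF : IsFrobenius T F)
    (hsym : ∀ y, y ∉ T → y ≠ F → (F - y ∈ T ∨ 2 * y = F)) : IsIrreducibleNS T := by
  refine ⟨hT, ?_⟩
  rintro ⟨T₁, T₂, h₁, h₂, hs₁, hs₂, heq⟩
  have key : ∀ T' : Set ℕ, IsNumericalSemigroup T' → T ⊂ T' → F ∈ T' := by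
    intro T' hT' hss
    by_contra hFT'
    obtain ⟨t, htT', htT⟩ := Set.exists_of_ssubset hss
    have htF : t ≠ F := fun he => hFT' (he ▸ htT')
    have htleF : t ≤ F := hF.2 t htT
    rcases hsym t htT htF with hFt | h2t
    · have he : t + (F - t) = F := by omega
      exact hFT' (he ▸ hT'.2.1 t htT' _ (hss.1 hFt))
    · have he : t + t = F := by omega
      exact hFT' (he ▸ hT'.2.1 t htT' t htT')
  have hF1 := key T₁ h₁ hs₁
  have hF2 := key T₂ h₂ hs₂
  exact hF.1 (heq ▸ Set.mem_inter hF1 hF2)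

theorem stmt12' (S : Set ℕ) (F x m : ℕ)
    (hirr : IsIrreducibleNS S) (hF : IsFrobenius S F)
    (hx : IsMinGen S x)
    (h1 : F < 2 * x) (h2 : x < F) (h3 : 2 * x - F ∉ S)
    (h4 : 3 * x ≠ 2 * F) (h5 : 4 * x ≠ 3 * F) :
    IsIrreducibleNS ((S \ {x}) ∪ {F - x}) ∧ IsFrobenius ((S \ {x}) ∪ {F - x}) F := by
  have hS := hirr.1
  have hsym := sym_of_irr hirr hF
  set T : Set ℕ := (S \ {x}) ∪ {F - x} with hTdef
  have hmemT : ∀ n, n ∈ T ↔ ((n ∈ S ∧ n ≠ x) ∨ n = F - x) := by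
    intro n
    rw [hTdef, Set.mem_union, Set.mem_diff, Set.mem_singleton_iff, Set.mem_singleton_iff]
  -- 2(F-x) ∈ S and ≠ x
  have h2g : 2 * (F - x) ∈ S := by
    rcases hsym (2 * x - F) h3 (by omega) with hc | hc
    · rwa [show F - (2 * x - F) = 2 * (F - x) by omega] at hc
    · omega
  have h2gx : 2 * (F - x) ≠ x := by omega
  -- closure of T under adding F - x
  have hgs : ∀ s ∈ S, s ≠ x → (F - x) + s ∈ T := by
    intro s hs hsx
    rcases eq_or_ne s 0 with rfl | hs0
    · exact (hmemT _).mpr (Or.inr (by omega))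
    rcases lt_trichotomy s x with hlt | heq | hgt
    · have hmem : F - x + s ∈ S := by
        by_contra hmem
        have hne : F - x + s ≠ F := by omega
        rcases hsym _ hmem hne with hc | hc
        · rw [show F - (F - x + s) = x - s by omega] at hc
          exact hx.2.2 ⟨x - s, hc, s, hs, by omega, hs0, by omega⟩
        · have hss : s + s ∈ S := hS.2.1 s hs s hs
          rw [show s + s = 2 * x - F by omega] at hss
          exact h3 hss
      refine (hmemT _).mpr (Or.inl ⟨hmem, ?_⟩)
      intro he
      have hse : s = 2 * x - F := by omega
      exact h3 (hse ▸ hs)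
    · exact absurd heq hsx
    · have hmem : F - x + s ∈ S := ns_gt_frob hF (by omega)
      exact (hmemT _).mpr (Or.inl ⟨hmem, by omega⟩)
  -- T is a numerical semigroup
  have hTns : IsNumericalSemigroup T := by
    refine ⟨(hmemT 0).mpr (Or.inl ⟨hS.1, Ne.symm hx.2.1⟩), ?_, ?_⟩
    · intro a ha b hb
      rw [hmemT] at ha hb
      rcases ha with ⟨haS, hax⟩ | ha <;> rcases hb with ⟨hbS, hbx⟩ | hb
      · refine (hmemT _).mpr (Or.inl ⟨hS.2.1 a haS b hbS, ?_⟩)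
        intro habx
        rcases eq_or_ne a 0 with rfl | ha0
        · exact hbx (by omega)
        rcases eq_or_ne b 0 with rfl | hb0
        · exact hax (by omega)
        exact hx.2.2 ⟨a, haS, b, hbS, ha0, hb0, habx.symm⟩
      · rw [hb, add_comm]; exact hgs a haS hax
      · rw [ha]; exact hgs b hbS hbx
      · rw [ha, hb, show F - x + (F - x) = 2 * (F - x) by ring]
        exact (hmemT _).mpr (Or.inl ⟨h2g, h2gx⟩)
    · refine (hS.2.2.union (Set.finite_singleton x)).subset ?_
      intro n hn
      rw [Set.mem_compl_iff, hmemT] at hn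
      by_cases hnx : n = x
      · exact Or.inr hnx
      · exact Or.inl fun hnS => hn (Or.inl ⟨hnS, hnx⟩)
  -- F is the Frobenius number of T
  have hTF : IsFrobenius T F := by
    constructor
    · intro hFT
      rcases (hmemT F).mp hFT with ⟨hc, _⟩ | hc
      · exact hF.1 hc
      · omega
    · intro n hn
      by_contra hnF
      push_neg at hnF
      exact hn ((hmemT n).mpr (Or.inl ⟨ns_gt_frob hF hnF, by omega⟩))
  -- symmetry property for T
  have hTsym : ∀ y, y ∉ T → y ≠ F → (F - y ∈ T ∨ 2 * y = F) := by
    intro y hyT hyF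
    rw [hmemT] at hyT
    push_neg at hyT
    obtain ⟨hy1, hyg⟩ := hyT
    by_cases hyx : y = x
    · exact Or.inl ((hmemT _).mpr (Or.inr (by omega)))
    have hyS : y ∉ S := fun hy => absurd (hy1 hy) (by simp [hyx])
    have hyleF : y ≤ F := hF.2 y hyS
    rcases hsym y hyS hyF with hc | hc
    · exact Or.inl ((hmemT _).mpr (Or.inl ⟨hc, by omega⟩))
    · exact Or.inr hc
  exact ⟨irr_of_sym hTns hTF hTsym, hTF⟩

theorem stmt12 (S : Set ℕ) (F x m : ℕ)
    (hirr : IsIrreducibleNS S) (hF : IsFrobenius S F)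
    (hm : IsMultiplicity S m) (hx : IsMinGen S x)
    (h1 : F < 2 * x) (h2 : x < F) (h3 : 2 * x - F ∉ S)
    (h4 : 3 * x ≠ 2 * F) (h5 : 4 * x ≠ 3 * F) (h6 : F - x < m) :
    IsIrreducibleNS ((S \ {x}) ∪ {F - x}) ∧ IsFrobenius ((S \ {x}) ∪ {F - x}) F := stmt12' S F x m hirr hF hx h1 h2 h3 h4 h5
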